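/- Let m = n ≥ 2 and 1 ≤ i < j ≤ n. Then √(I_n^i + I_n^j) = L_{j,n+1−i,1} = ⟨x_0,…,x_{j−1}, y_0,…,y_{n−i}, z_0⟩; in particular this radical is a prime ideal, so the intersection Z_n^i ∩ Z_n^j of the corresponding zero loci is irreducible. -/

import Mathlib

noncomputable section

open MvPolynomial

/-- `R N = ℂ[x_0,…,x_N, y_0,…,y_N, z_0,…,z_N]`. -/
abbrev R (N : ℕ) : Type := MvPolynomial (Fin 3 × Fin (N + 1)) ℂ

/-- the variable `x_i` (for `i ≤ N`). -/
def Xv (N i : ℕ) : R N := if h : i < N + 1 then X (0, ⟨i, h⟩) else 0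
/-- the variable `y_i` (for `i ≤ N`). -/
def Yv (N i : ℕ) : R N := if h : i < N + 1 then X (1, ⟨i, h⟩) else 0
/-- the variable `z_i` (for `i ≤ N`). -/
def Zv (N i : ℕ) : R N := if h : i < N + 1 then X (2, ⟨i, h⟩) else 0

/-- `Σ_{i=p}^N x_i t^i`. -/
def xSer (N p : ℕ) : Polynomial (R N) :=
  ∑ i ∈ Finset.Icc p N, Polynomial.C (Xv N i) * Polynomial.X ^ i
/-- `Σ_{i=q}^N y_i t^i`. -/
def ySer (N q : ℕ) : Polynomial (R N) :=
  ∑ i ∈ Finset.Icc q N, Polynomial.C (Yv N i) * Polynomial.X ^ i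
/-- `Σ_{i=r}^N z_i t^i`. -/
def zSer (N r : ℕ) : Polynomial (R N) :=
  ∑ i ∈ Finset.Icc r N, Polynomial.C (Zv N i) * Polynomial.X ^ i

/-- `f_{pqr}^{(j)}`: the coefficient of `t^j` in
`f(Σ_{i=p}^N x_i t^i, Σ_{i=q}^N y_i t^i, Σ_{i=r}^N z_i t^i)` where `f = xy - z^{n+1}`. -/
def fpqr (N n p q r j : ℕ) : R N :=
  (xSer N p * ySer N q - zSer N r ^ (n + 1)).coeff j


/-- The ideal `L_{pqr} = ⟨x_0,…,x_{p−1}, y_0,…,y_{q−1}, z_0,…,z_{r−1}⟩`. -/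
def Lpqr (N p q r : ℕ) : Ideal (R N) :=
  Ideal.span ((Xv N '' Set.Iio p) ∪ (Yv N '' Set.Iio q) ∪ (Zv N '' Set.Iio r))

/-- The substitution `x_i ↦ x_{l+i}`, `y_i ↦ y_{e(n+1)−l+i}`, `z_i ↦ z_{e+i}`. -/
def shiftSub (N n l e : ℕ) : Fin 3 × Fin (N + 1) → R N := fun v =>
  if v.1 = 0 then Xv N (l + (v.2 : ℕ))
  else if v.1 = 1 then Yv N (e * (n + 1) - l + (v.2 : ℕ))
  else Zv N (e + (v.2 : ℕ))

/-- `g_{l,e}^{(j)}`: obtained from `f^{(j)} = f_{000}^{(j)}` by the substitution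
`x_i ↦ x_{l+i}`, `y_i ↦ y_{e(n+1)−l+i}`, `z_i ↦ z_{e+i}`. -/
def gle (N n l e j : ℕ) : R N := aeval (shiftSub N n l e) (fpqr N n 0 0 0 j)

/-- The ideal `⟨f^{(0)},…,f^{(m)}⟩` of `R_m`. -/
def Fideal (m n : ℕ) : Ideal (R m) :=
  Ideal.span {g | ∃ j ≤ m, g = fpqr m n 0 0 0 j}

/-- `I_m^l = L_{l,n+1−l,1} + ⟨f^{(0)},…,f^{(m)}⟩`. -/
def Iml (m n l : ℕ) : Ideal (R m) := Lpqr m l (n + 1 - l) 1 ⊔ Fideal m n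

/-- `G_m^l = ⟨g_{l,1}^{(0)},…,g_{l,1}^{(m−n−1)}⟩` (the zero ideal when `m = n`). -/
def Gml (m n l : ℕ) : Ideal (R m) :=
  Ideal.span {g | ∃ j < m - n, g = gle m n l 1 j}

/-- Points of `ℂ^{3(m+1)}`. -/
abbrev Pt (m : ℕ) := Fin 3 × Fin (m + 1) → ℂ

/-- The zero locus in `ℂ^{3(m+1)}` of an ideal of `R_m`. -/
def zl (m : ℕ) (I : Ideal (R m)) : Set (Pt m) := {x | ∀ g ∈ I, eval x g = 0}

/-- `Z_m^l ⊆ ℂ^{3(m+1)}`, the zero locus of `I_m^l`. -/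
def Zml (m n l : ℕ) : Set (Pt m) := zl m (Iml m n l)

/-- A subset of `ℂ^{3(m+1)}` is irreducible with respect to the Zariski topology,
whose closed sets are exactly the zero loci of ideals of `R_m`. -/
def IsIrredSet (m : ℕ) (S : Set (Pt m)) : Prop :=
  S.Nonempty ∧
    ∀ I₁ I₂ : Ideal (R m), S ⊆ zl m I₁ ∪ zl m I₂ → S ⊆ zl m I₁ ∨ S ⊆ zl m I₂

/-! ### Auxiliary machinery -/

open Classical in
/-- The algebra endomorphism killing the variables in `s`. -/
def auxKill {σ : Type*} (s : Set σ) : MvPolynomial σ ℂ →ₐ[ℂ] MvPolynomial σ ℂ :=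
  aeval (fun v => if v ∈ s then 0 else X v)

lemma auxKill_X_mem {σ : Type*} {s : Set σ} {v : σ} (hv : v ∈ s) :
    auxKill s (X v) = 0 := by
  classical simp [auxKill, hv]

lemma auxKill_X_not_mem {σ : Type*} {s : Set σ} {v : σ} (hv : v ∉ s) :
    auxKill s (X v) = X v := by
  classical simp [auxKill, hv]

lemma sub_auxKill_mem {σ : Type*} (s : Set σ) (p : MvPolynomial σ ℂ) :
    p - auxKill s p ∈ Ideal.span (X '' s : Set (MvPolynomial σ ℂ)) := by
  induction p using MvPolynomial.induction_on with
  | C a => simp [auxKill]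
  | add p q hp hq =>
      rw [map_add, add_sub_add_comm]
      exact Ideal.add_mem _ hp hq
  | mul_X p v hp =>
      by_cases hv : v ∈ s
      · have hxv : (X v : MvPolynomial σ ℂ) ∈ Ideal.span (X '' s : Set (MvPolynomial σ ℂ)) :=
          Ideal.subset_span ⟨v, hv, rfl⟩
        rw [map_mul, auxKill_X_mem hv, mul_zero, sub_zero]
        exact Ideal.mul_mem_left _ p hxv
      · rw [map_mul, auxKill_X_not_mem hv, ← sub_mul]
        exact Ideal.mul_mem_right _ _ hp

lemma ker_auxKill {σ : Type*} (s : Set σ) :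
    RingHom.ker (auxKill s : MvPolynomial σ ℂ →ₐ[ℂ] MvPolynomial σ ℂ).toRingHom
      = Ideal.span (X '' s : Set (MvPolynomial σ ℂ)) := by
  apply le_antisymm
  · intro p hp
    have h0 : auxKill s p = 0 := hp
    have := sub_auxKill_mem s p
    rwa [h0, sub_zero] at this
  · rw [Ideal.span_le]
    rintro _ ⟨v, hv, rfl⟩
    exact auxKill_X_mem hv

lemma prime_span_X {σ : Type*} (s : Set σ) :
    (Ideal.span (X '' s : Set (MvPolynomial σ ℂ))).IsPrime := by
  rw [← ker_auxKill s]
  exact RingHom.ker_isPrime _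

lemma aux_eval_aeval {σ : Type*} (y : σ → ℂ) (f : σ → MvPolynomial σ ℂ)
    (p : MvPolynomial σ ℂ) :
    eval y (aeval f p) = eval (fun v => eval y (f v)) p := by
  induction p using MvPolynomial.induction_on with
  | C a => simp
  | add p q hp hq => simp only [map_add, hp, hq]
  | mul_X p v hp => simp only [map_mul, hp, aeval_X, eval_X]

lemma mem_span_of_vanish {σ : Type*} (s : Set σ) (g : MvPolynomial σ ℂ)
    (h : ∀ x : σ → ℂ, (∀ v ∈ s, x v = 0) → eval x g = 0) :
    g ∈ Ideal.span (X '' s : Set (MvPolynomial σ ℂ)) := by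
  classical
  rw [← ker_auxKill s]
  show auxKill s g = 0
  apply MvPolynomial.funext (q := 0)
  intro y
  rw [map_zero]
  rw [auxKill, aux_eval_aeval]
  have hx : (fun v => eval y (if v ∈ s then 0 else X v))
      = fun v => if v ∈ s then 0 else y v := by
    funext v; split <;> simp
  rw [hx]
  apply h
  intro v hv
  simp [hv]

lemma mem_zl_span {m : ℕ} {G : Set (R m)} {x : Pt m}
    (h : ∀ g ∈ G, eval x g = 0) : x ∈ zl m (Ideal.span G) := by
  intro g hg
  have hle : Ideal.span G ≤ RingHom.ker (eval x) := Ideal.span_le.mpr h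
  exact hle hg

lemma zl_sup (m : ℕ) (I J : Ideal (R m)) : zl m (I ⊔ J) = zl m I ∩ zl m J := by
  ext x
  constructor
  · intro hx
    exact ⟨fun g hg => hx g (Ideal.mem_sup_left hg),
           fun g hg => hx g (Ideal.mem_sup_right hg)⟩
  · rintro ⟨h1, h2⟩ g hg
    have hle : I ⊔ J ≤ RingHom.ker (eval x) :=
      sup_le (fun g hg => h1 g hg) (fun g hg => h2 g hg)
    exact hle hg

lemma mem_zl_span_X_iff {m : ℕ} (S : Set (Fin 3 × Fin (m + 1))) (x : Pt m) :
    x ∈ zl m (Ideal.span (X '' S : Set (R m))) ↔ ∀ v ∈ S, x v = 0 := by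
  constructor
  · intro hx v hv
    have := hx (X v) (Ideal.subset_span ⟨v, hv, rfl⟩)
    simpa using this
  · intro hx
    apply mem_zl_span
    rintro _ ⟨v, hv, rfl⟩
    simpa using hx v hv

lemma Lpqr_mono {N p q r p' q' r' : ℕ} (hp : p ≤ p') (hq : q ≤ q') (hr : r ≤ r') :
    Lpqr N p q r ≤ Lpqr N p' q' r' := by
  apply Ideal.span_mono
  apply Set.union_subset_union
  apply Set.union_subset_union
  · exact Set.image_mono (Set.Iio_subset_Iio hp)
  · exact Set.image_mono (Set.Iio_subset_Iio hq)
  · exact Set.image_mono (Set.Iio_subset_Iio hr)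

lemma Lpqr_eq_span_X (N p q r : ℕ) (hp : p ≤ N + 1) (hq : q ≤ N + 1) (hr : r ≤ N + 1) :
    Lpqr N p q r = Ideal.span (X ''
      {v : Fin 3 × Fin (N + 1) | (v.1 = 0 ∧ (v.2 : ℕ) < p) ∨ (v.1 = 1 ∧ (v.2 : ℕ) < q)
        ∨ (v.1 = 2 ∧ (v.2 : ℕ) < r)} : Set (R N)) := by
  rw [Lpqr]
  congr 1
  ext g
  constructor
  · rintro ((⟨a, ha, rfl⟩ | ⟨a, ha, rfl⟩) | ⟨a, ha, rfl⟩)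
    · have h1 : a < N + 1 := lt_of_lt_of_le ha hp
      exact ⟨(0, ⟨a, h1⟩), Or.inl ⟨rfl, ha⟩, by simp [Xv, h1]⟩
    · have h1 : a < N + 1 := lt_of_lt_of_le ha hq
      exact ⟨(1, ⟨a, h1⟩), Or.inr (Or.inl ⟨rfl, ha⟩), by simp [Yv, h1]⟩
    · have h1 : a < N + 1 := lt_of_lt_of_le ha hr
      exact ⟨(2, ⟨a, h1⟩), Or.inr (Or.inr ⟨rfl, ha⟩), by simp [Zv, h1]⟩
  · rintro ⟨⟨c, k⟩, (⟨hc, hk⟩ | ⟨hc, hk⟩ | ⟨hc, hk⟩), rfl⟩ <;> subst hc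
    · exact Or.inl (Or.inl ⟨(k : ℕ), hk, by simp [Xv, k.isLt]⟩)
    · exact Or.inl (Or.inr ⟨(k : ℕ), hk, by simp [Yv, k.isLt]⟩)
    · exact Or.inr ⟨(k : ℕ), hk, by simp [Zv, k.isLt]⟩

lemma xSer_coeff (N a : ℕ) : (xSer N 0).coeff a = Xv N a := by
  rw [xSer, Polynomial.finset_sum_coeff]
  simp only [Polynomial.coeff_C_mul, Polynomial.coeff_X_pow, mul_ite, mul_one, mul_zero]
  rw [Finset.sum_ite_eq (Finset.Icc 0 N) a (fun i => Xv N i)]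
  by_cases h : a ≤ N
  · simp [h]
  · have : ¬ a < N + 1 := by omega
    simp [h, Xv, this]

lemma ySer_coeff (N a : ℕ) : (ySer N 0).coeff a = Yv N a := by
  rw [ySer, Polynomial.finset_sum_coeff]
  simp only [Polynomial.coeff_C_mul, Polynomial.coeff_X_pow, mul_ite, mul_one, mul_zero]
  rw [Finset.sum_ite_eq (Finset.Icc 0 N) a (fun i => Yv N i)]
  by_cases h : a ≤ N
  · simp [h]
  · have : ¬ a < N + 1 := by omega
    simp [h, Yv, this]

lemma zSer_coeff (N a : ℕ) : (zSer N 0).coeff a = Zv N a := by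
  rw [zSer, Polynomial.finset_sum_coeff]
  simp only [Polynomial.coeff_C_mul, Polynomial.coeff_X_pow, mul_ite, mul_one, mul_zero]
  rw [Finset.sum_ite_eq (Finset.Icc 0 N) a (fun i => Zv N i)]
  by_cases h : a ≤ N
  · simp [h]
  · have : ¬ a < N + 1 := by omega
    simp [h, Zv, this]

/-- The key computation: for `k ≤ n`, `f^{(k)} ∈ L_{j,n+1-i,1}`. -/
lemma fpqr_mem_L (n i j k : ℕ) (hi : 1 ≤ i) (hij : i < j) (hj : j ≤ n) (hk : k ≤ n) :
    fpqr n n 0 0 0 k ∈ Lpqr n j (n + 1 - i) 1 := by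
  set L := Lpqr n j (n + 1 - i) 1 with hLdef
  rw [← Ideal.Quotient.eq_zero_iff_mem]
  set φ := Ideal.Quotient.mk L with hφ
  have hXmem : ∀ a < j, Xv n a ∈ L := by
    intro a ha
    exact Ideal.subset_span (Or.inl (Or.inl ⟨a, ha, rfl⟩))
  have hYmem : ∀ b < n + 1 - i, Yv n b ∈ L := by
    intro b hb
    exact Ideal.subset_span (Or.inl (Or.inr ⟨b, hb, rfl⟩))
  have hZmem : Zv n 0 ∈ L :=
    Ideal.subset_span (Or.inr ⟨0, Nat.zero_lt_one, rfl⟩)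
  have hmain : φ (fpqr n n 0 0 0 k) =
      ((xSer n 0 * ySer n 0 - zSer n 0 ^ (n + 1)).map φ).coeff k := by
    rw [fpqr, Polynomial.coeff_map]
  rw [hmain, Polynomial.map_sub, Polynomial.map_mul, Polynomial.map_pow,
    Polynomial.coeff_sub]
  have hxy : ((xSer n 0).map φ * (ySer n 0).map φ).coeff k = 0 := by
    rw [Polynomial.coeff_mul]
    apply Finset.sum_eq_zero
    rintro ⟨a, b⟩ hab
    rw [Finset.HasAntidiagonal.mem_antidiagonal] at hab
    simp only [Polynomial.coeff_map, xSer_coeff, ySer_coeff]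
    by_cases ha : a < j
    · rw [Ideal.Quotient.eq_zero_iff_mem.mpr (hXmem a ha), zero_mul]
    · have hb : b < n + 1 - i := by omega
      rw [Ideal.Quotient.eq_zero_iff_mem.mpr (hYmem b hb), mul_zero]
  have hz : (((zSer n 0).map φ) ^ (n + 1)).coeff k = 0 := by
    have hdvd : (Polynomial.X : Polynomial (R n ⧸ L)) ∣ (zSer n 0).map φ := by
      rw [Polynomial.X_dvd_iff, Polynomial.coeff_map, zSer_coeff]
      exact Ideal.Quotient.eq_zero_iff_mem.mpr hZmem
    obtain ⟨u, hu⟩ : (Polynomial.X : Polynomial (R n ⧸ L)) ^ (n + 1) ∣ ((zSer n 0).map φ) ^ (n + 1) := by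
      obtain ⟨v, hv⟩ := hdvd
      exact ⟨v ^ (n + 1), by rw [hv, (Polynomial.commute_X v).mul_pow]⟩
    rw [hu, Polynomial.coeff_X_pow_mul']
    have : ¬ (n + 1 ≤ k) := by omega
    simp [this]
  rw [hxy, hz, sub_zero]


/- STATEMENT 7: for `m = n ≥ 2` and `1 ≤ i < j ≤ n`,
`√(I_n^i + I_n^j) = L_{j,n+1−i,1}`, this ideal is prime,
and `Z_n^i ∩ Z_n^j` is irreducible. -/
theorem stmt7 (n : ℕ) (hn : 2 ≤ n) (i j : ℕ) (hi : 1 ≤ i) (hij : i < j) (hj : j ≤ n) :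
    (Iml n n i ⊔ Iml n n j).radical = Lpqr n j (n + 1 - i) 1 ∧
    (Lpqr n j (n + 1 - i) 1).IsPrime ∧
    IsIrredSet n (Zml n n i ∩ Zml n n j) := by
  have hLspan : Lpqr n j (n + 1 - i) 1 = Ideal.span (X ''
      {v : Fin 3 × Fin (n + 1) | (v.1 = 0 ∧ (v.2 : ℕ) < j) ∨ (v.1 = 1 ∧ (v.2 : ℕ) < n + 1 - i)
        ∨ (v.1 = 2 ∧ (v.2 : ℕ) < 1)} : Set (R n)) :=
    Lpqr_eq_span_X n j (n + 1 - i) 1 (by omega) (by omega) (by omega)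
  set S : Set (Fin 3 × Fin (n + 1)) :=
    {v | (v.1 = 0 ∧ (v.2 : ℕ) < j) ∨ (v.1 = 1 ∧ (v.2 : ℕ) < n + 1 - i)
      ∨ (v.1 = 2 ∧ (v.2 : ℕ) < 1)} with hS
  have hprime : (Lpqr n j (n + 1 - i) 1).IsPrime := by
    rw [hLspan]; exact prime_span_X S
  have hFle : Fideal n n ≤ Lpqr n j (n + 1 - i) 1 := by
    rw [Fideal, Ideal.span_le]
    rintro _ ⟨k, hk, rfl⟩
    exact fpqr_mem_L n i j k hi hij hj hk
  have hsum : Iml n n i ⊔ Iml n n j = Lpqr n j (n + 1 - i) 1 := by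
    apply le_antisymm
    · apply sup_le
      · rw [Iml]
        exact sup_le (Lpqr_mono (le_of_lt hij) le_rfl le_rfl) hFle
      · rw [Iml]
        exact sup_le (Lpqr_mono le_rfl (by omega) le_rfl) hFle
    · rw [Lpqr, Ideal.span_le]
      rintro g ((hA | hB) | hC)
      · have hmem : g ∈ Lpqr n j (n + 1 - j) 1 :=
          Ideal.subset_span (Or.inl (Or.inl hA))
        exact Ideal.mem_sup_right (Ideal.mem_sup_left hmem)
      · have hmem : g ∈ Lpqr n i (n + 1 - i) 1 :=
          Ideal.subset_span (Or.inl (Or.inr hB))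
        exact Ideal.mem_sup_left (Ideal.mem_sup_left hmem)
      · have hmem : g ∈ Lpqr n i (n + 1 - i) 1 :=
          Ideal.subset_span (Or.inr hC)
        exact Ideal.mem_sup_left (Ideal.mem_sup_left hmem)
  refine ⟨?_, hprime, ?_⟩
  · rw [hsum]
    exact hprime.radical
  · have hset : Zml n n i ∩ Zml n n j = zl n (Ideal.span (X '' S : Set (R n))) := by
      rw [Zml, Zml, ← zl_sup, hsum, hLspan]
    rw [hset]
    constructor
    · exact ⟨fun _ => 0, (mem_zl_span_X_iff S _).mpr (fun v hv => rfl)⟩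
    · intro I₁ I₂ hsub
      by_cases h1 : zl n (Ideal.span (X '' S : Set (R n))) ⊆ zl n I₁
      · exact Or.inl h1
      · right
        rw [Set.not_subset] at h1
        obtain ⟨p, hp, hp1⟩ := h1
        have hp1' : ∃ g₁ ∈ I₁, eval p g₁ ≠ 0 := by
          by_contra hcon
          push_neg at hcon
          exact hp1 hcon
        obtain ⟨g₁, hg₁, hg₁p⟩ := hp1'
        intro q hq g₂ hg₂
        have hmul : g₁ * g₂ ∈ Ideal.span (X '' S : Set (R n)) := by
          apply mem_span_of_vanish
          intro x hx
          have hxzl : x ∈ zl n (Ideal.span (X '' S : Set (R n))) :=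
            (mem_zl_span_X_iff S x).mpr hx
          rcases hsub hxzl with hx1 | hx2
          · rw [map_mul, hx1 g₁ hg₁, zero_mul]
          · rw [map_mul, hx2 g₂ hg₂, mul_zero]
        rcases (prime_span_X S).mem_or_mem hmul with hmem | hmem
        · exact absurd (hp g₁ hmem) hg₁p
        · exact hq g₂ hmem


end
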